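/- arXiv:2202.12489 — 2 statements merged into one kernel-verified Lean document; each statement's English description precedes it below -/
import Mathlib

section
/- Let n ≥ 2 and 1 ≤ k ≤ n−1. For every t with 1 ≤ t ≤ n−1 and all vectors u_1, …, u_k ∈ H_1, one has Ψ(Φ_t(u_1), Φ_t(u_2), …, Φ_t(u_k)) = q^{k−1} · Φ_t(Ψ(u_1, …, u_k)) in T_n. (Twisted equivariance of the iterated product map under the one-crossing braid generators.) -/
open scoped BigOperators

set_option maxHeartbeats 1000000
set_option synthInstance.maxHeartbeats 400000

noncomputable section

/-- The ground field `K = ℂ(q)`. -/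
abbrev K : Type := RatFunc ℂ

/-- The variable `q` of `K = ℂ(q)`. -/
def q : K := RatFunc.X

/-- `T n` models the `n`-th tensor power of the vector representation of
`U_q(gl(1|1))`, as functions on binary strings of length `n`. -/
abbrev T (n : ℕ) : Type := (Fin n → Fin 2) → K

/-- The standard basis vector `v_α` of `T n`. -/
def v (n : ℕ) (α : Fin n → Fin 2) : T n := fun β => if β = α then 1 else 0

/-- `v₀^{⊗ n}`, the basis vector of the all-zeroes string. -/
def v0 (n : ℕ) : T n := v n (fun _ => 0)

/-- `w n i` is the basis vector whose string has a single `1` in (1-indexed) position `i`. -/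
def w (n i : ℕ) : T n := v n (fun j => if (j : ℕ) + 1 = i then 1 else 0)

/-- `e i = -w_i + q⁻¹ w_{i+1}`. -/
def e (n i : ℕ) : T n := -(w n i) + q⁻¹ • w n (i + 1)

/-- The `R`-matrix on a pair of strands: entry `Rmat out inp`. -/
def Rmat : Fin 2 × Fin 2 → Fin 2 × Fin 2 → K := fun out inp =>
  if inp = (0, 0) then (if out = (0, 0) then q else 0)
  else if inp = (1, 0) then (if out = (0, 1) then 1 else 0)
  else if inp = (0, 1) then
    (if out = (1, 0) then 1 else if out = (0, 1) then q - q⁻¹ else 0)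
  else (if out = (1, 1) then -q⁻¹ else 0)

/-- The `R`-matrix acting at positions `i`, `j` (0-indexed) of `T n`. -/
def PhiAux (n : ℕ) (i j : Fin n) : T n →ₗ[K] T n where
  toFun f := fun β => ∑ p : Fin 2 × Fin 2,
    Rmat (β i, β j) p * f (Function.update (Function.update β i p.1) j p.2)
  map_add' f g := by
    funext β
    simp only [Pi.add_apply]
    rw [← Finset.sum_add_distrib]
    exact Finset.sum_congr rfl fun p _ => by simp [mul_add]
  map_smul' c f := by
    funext β
    simp only [Pi.smul_apply, smul_eq_mul, RingHom.id_apply]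
    rw [Finset.mul_sum]
    exact Finset.sum_congr rfl fun p _ => by ring

/-- `Phi n t` is the map induced by the braid generator `σ_t` (with `1 ≤ t ≤ n-1`),
acting through the `R`-matrix at (1-indexed) positions `(t, t+1)`. -/
def Phi (n t : ℕ) : T n →ₗ[K] T n :=
  if h : 0 < t ∧ t < n then PhiAux n ⟨t - 1, by omega⟩ ⟨t, h.2⟩ else 0

/-- The action of `E` on `T n`. -/
def En (n : ℕ) : T n →ₗ[K] T n where
  toFun f := fun β => ∑ i : Fin n,
    if β i = 0 then
      ((-1 : K) ^ (Finset.univ.filter (fun j : Fin n => j < i ∧ β j = 1)).card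
        * q⁻¹ ^ (n - 1 - (i : ℕ))) * f (Function.update β i 1)
    else 0
  map_add' f g := by
    funext β
    simp only [Pi.add_apply]
    rw [← Finset.sum_add_distrib]
    refine Finset.sum_congr rfl fun i _ => ?_
    by_cases h : β i = 0 <;> simp [h, mul_add]
  map_smul' c f := by
    funext β
    simp only [Pi.smul_apply, smul_eq_mul, RingHom.id_apply]
    rw [Finset.mul_sum]
    refine Finset.sum_congr rfl fun i _ => ?_
    by_cases h : β i = 0 <;> simp [h] <;> ring

/-- The action of `F` on `T n`. -/
def Fn (n : ℕ) : T n →ₗ[K] T n where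
  toFun f := fun β => ∑ i : Fin n,
    if β i = 1 then
      ((-1 : K) ^ (Finset.univ.filter (fun j : Fin n => j < i ∧ β j = 1)).card
        * q ^ (i : ℕ)) * f (Function.update β i 0)
    else 0
  map_add' f g := by
    funext β
    simp only [Pi.add_apply]
    rw [← Finset.sum_add_distrib]
    refine Finset.sum_congr rfl fun i _ => ?_
    by_cases h : β i = 1 <;> simp [h, mul_add]
  map_smul' c f := by
    funext β
    simp only [Pi.smul_apply, smul_eq_mul, RingHom.id_apply]
    rw [Finset.mul_sum]
    refine Finset.sum_congr rfl fun i _ => ?_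
    by_cases h : β i = 1 <;> simp [h] <;> ring

/-- The number of `1`s in a binary string. -/
def wt {n : ℕ} (α : Fin n → Fin 2) : ℕ := (Finset.univ.filter (fun i => α i = 1)).card

/-- `Tk n k` is the span of the basis vectors with exactly `k` entries equal to `1`. -/
def Tk (n k : ℕ) : Submodule K (T n) :=
  Submodule.span K {f : T n | ∃ α, wt α = k ∧ f = v n α}

/-- `Hk n k` is the space of highest weight vectors of weight `(n-k)ε₁ + kε₂`. -/
def Hk (n k : ℕ) : Submodule K (T n) := LinearMap.ker (En n) ⊓ Tk n k

/-- The bilinear product `m` on `T n`. -/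
def mul2 (n : ℕ) (f g : T n) : T n := fun γ =>
  ∑ α : Fin n → Fin 2,
    if (∀ i, α i = 1 → γ i = 1) then
      ((-1 : K) ^ (∑ p ∈ Finset.univ.filter (fun p : Fin n × Fin n => p.1 < p.2),
          (((fun i => if α i = 1 then 0 else γ i) p.1 : Fin 2) : ℕ) * ((α p.2 : Fin 2) : ℕ)))
        * f α * g (fun i => if α i = 1 then 0 else γ i)
    else 0

/-- The left-iterated product `Ψ(u_1, …, u_k) = m(…m(m(u_1,u_2),u_3)…,u_k)`. -/
def Psi (n : ℕ) : (k : ℕ) → (Fin k → T n) → T n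
  | 0, _ => v0 n
  | 1, u => u 0
  | (k + 2), u => mul2 n (Psi n (k + 1) (fun i => u i.castSucc)) (u (Fin.last (k + 1)))

/-- Concatenation (tensor product) `T a ⊗ T b → T (a + b)`. -/
def conc {a b : ℕ} (f : T a) (g : T b) : T (a + b) := fun γ =>
  f (fun i => γ (Fin.castAdd b i)) * g (fun i => γ (Fin.natAdd a i))

/-- Identification `T a ≃ T b` for `a = b`. -/
def castT {a b : ℕ} (h : a = b) (f : T a) : T b := fun γ => f (fun i => γ (Fin.cast h i))

/-- The block vector `Θ_b = Σ_{r=0}^{b-1} (-1)^r q^{-(b-1-r)} v_{β(r)}`. -/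
def Theta (b : ℕ) : T b :=
  ∑ r : Fin b, ((-1 : K) ^ (r : ℕ) * q⁻¹ ^ (b - 1 - (r : ℕ))) •
    v b (fun i => if i = r then 0 else 1)

/-- The map induced by the braid `λ = σ_{n-1} ⋯ σ_1`. -/
def Lam (n : ℕ) : T n →ₗ[K] T n :=
  ((List.range (n - 1)).map (fun t => Phi n (t + 1))).foldl (fun acc g => g ∘ₗ acc) LinearMap.id

/-- The Vandermonde-type matrix `B(n)`. -/
def B (n : ℕ) : Matrix (Fin n) (Fin n) K :=
  fun i j => q ^ ((i : ℤ) * (n : ℤ) * ((n : ℤ) - 1 - 2 * (j : ℤ)))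

/-- `C(n) = B(n)⁻¹`. -/
def Cmat (n : ℕ) : Matrix (Fin n) (Fin n) K := (B n)⁻¹

/-- A combinatorial string `(a_1, b_1, a_2, b_2, …, b_l, a_{l+1})`. -/
structure GString where
  l : ℕ
  a : Fin (l + 1) → ℕ
  b : Fin l → ℕ

/-- Membership of a string in `S_k` (for strands number `n`). -/
def memSk (n k : ℕ) (s : GString) : Prop :=
  (∀ i, 2 ≤ s.b i) ∧ (∑ i, (s.b i - 1)) = k ∧ ((∑ i, s.a i) + ∑ i, s.b i) = n

/-- The length of the string, computed blockwise. -/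
def lenOf : (l : ℕ) → (Fin (l + 1) → ℕ) → (Fin l → ℕ) → ℕ
  | 0, a, _ => a 0
  | (l + 1), a, b => (a 0 + b 0) + lenOf l (fun i => a i.succ) (fun i => b i.succ)

/-- The concatenation `v₀^{⊗a_1} ⊗ Θ_{b_1} ⊗ ⋯ ⊗ Θ_{b_l} ⊗ v₀^{⊗a_{l+1}}`. -/
def rawphi : (l : ℕ) → (a : Fin (l + 1) → ℕ) → (b : Fin l → ℕ) → T (lenOf l a b)
  | 0, a, _ => v0 (a 0)
  | (l + 1), a, b =>
      conc (conc (v0 (a 0)) (Theta (b 0)))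
        (rawphi l (fun i => a i.succ) (fun i => b i.succ))

/-- `φ(s) ∈ T n`, the vector associated to a string `s`. -/
def phi (n : ℕ) (s : GString) : T n :=
  if h : lenOf s.l s.a s.b = n then castT h (rawphi s.l s.a s.b) else 0


/-! ### Auxiliary machinery -/

section Aux

open Finset

variable {n : ℕ}

/-- The double-sum form of the sign exponent in `mul2`. -/
def E2 (α β : Fin n → Fin 2) : ℕ :=
  ∑ m : Fin n, ∑ l : Fin n, (if l < m then ((β l : Fin 2) : ℕ) * ((α m : Fin 2) : ℕ) else 0)

lemma Efilter_eq (α β : Fin n → Fin 2) :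
    (∑ p ∈ Finset.univ.filter (fun p : Fin n × Fin n => p.1 < p.2),
      ((β p.1 : Fin 2) : ℕ) * ((α p.2 : Fin 2) : ℕ)) = E2 α β := by
  rw [Finset.sum_filter, Fintype.sum_prod_type, Finset.sum_comm]
  rfl

lemma E2_eq_left (α β : Fin n → Fin 2) :
    E2 α β = ∑ m : Fin n, ((α m : Fin 2) : ℕ) * ∑ l : Fin n, (if l < m then ((β l : Fin 2):ℕ) else 0) := by
  unfold E2
  refine Finset.sum_congr rfl fun m _ => ?_
  rw [Finset.mul_sum]
  refine Finset.sum_congr rfl fun l _ => ?_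
  split_ifs <;> ring

lemma E2_eq_right (α β : Fin n → Fin 2) :
    E2 α β = ∑ l : Fin n, ((β l : Fin 2) : ℕ) * ∑ m : Fin n, (if l < m then ((α m : Fin 2):ℕ) else 0) := by
  unfold E2
  rw [Finset.sum_comm]
  refine Finset.sum_congr rfl fun l _ => ?_
  rw [Finset.mul_sum]
  refine Finset.sum_congr rfl fun m _ => ?_
  split_ifs <;> ring

lemma sum_update (h : Fin n → Fin 2) (S : Fin n → ℕ) (m₀ : Fin n) (c : Fin 2) :
    ∑ m : Fin n, ((Function.update h m₀ c m : Fin 2) : ℕ) * S m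
      = (c : ℕ) * S m₀ + ∑ m : Fin n, ((Function.update h m₀ 0 m : Fin 2) : ℕ) * S m := by
  have e1 : ∀ (x : Fin 2), ∑ m : Fin n, ((Function.update h m₀ x m : Fin 2) : ℕ) * S m
      = (x : ℕ) * S m₀ + ∑ m ∈ Finset.univ.erase m₀, ((h m : Fin 2) : ℕ) * S m := by
    intro x
    rw [← Finset.add_sum_erase _ (fun m => ((Function.update h m₀ x m : Fin 2) : ℕ) * S m)
      (Finset.mem_univ m₀)]
    congr 1
    · rw [Function.update_self]
    · exact Finset.sum_congr rfl fun m hm => by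
        rw [Function.update_of_ne (Finset.ne_of_mem_erase hm)]
  rw [e1, e1]
  simp

end Aux
section Dec

variable {n : ℕ}

lemma E2_dec (i j : Fin n) (hij : (i : ℕ) + 1 = (j : ℕ)) (α β : Fin n → Fin 2)
    (a₁ a₂ b₁ b₂ : Fin 2) :
    E2 (Function.update (Function.update α i a₁) j a₂)
        (Function.update (Function.update β i b₁) j b₂)
      = E2 (Function.update (Function.update α i 0) j 0)
          (Function.update (Function.update β i 0) j 0)
        + (∑ l : Fin n, if l < i then ((β l : Fin 2) : ℕ) else 0) * ((a₁ : ℕ) + (a₂ : ℕ))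
        + (∑ m : Fin n, if j < m then ((α m : Fin 2) : ℕ) else 0) * ((b₁ : ℕ) + (b₂ : ℕ))
        + (a₂ : ℕ) * (b₁ : ℕ) := by
  have hne : i ≠ j := by intro h; subst h; omega
  have hne' : j ≠ i := hne.symm
  have hlt : i < j := by rw [Fin.lt_def]; omega
  set B := Function.update (Function.update β i b₁) j b₂ with hB
  set Y := ∑ l : Fin n, if l < i then ((β l : Fin 2) : ℕ) else 0 with hY
  set X := ∑ m : Fin n, if j < m then ((α m : Fin 2) : ℕ) else 0 with hX
  set A₀ := Function.update (Function.update α i 0) j 0 with hA0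
  -- the two partial sums against B
  have hSbi : (∑ l : Fin n, if l < i then ((B l : Fin 2) : ℕ) else 0) = Y := by
    refine Finset.sum_congr rfl fun l _ => ?_
    by_cases hl : l < i
    · have h1 : l ≠ i := ne_of_lt hl
      have h2 : l ≠ j := ne_of_lt (lt_trans hl hlt)
      rw [if_pos hl, if_pos hl, hB, Function.update_of_ne h2, Function.update_of_ne h1]
    · rw [if_neg hl, if_neg hl]
  have hSbj : (∑ l : Fin n, if l < j then ((B l : Fin 2) : ℕ) else 0) = (b₁ : ℕ) + Y := by
    have point : ∀ l : Fin n, (if l < j then ((B l : Fin 2) : ℕ) else 0)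
        = (if l = i then ((b₁ : Fin 2) : ℕ) else 0) + (if l < i then ((β l : Fin 2) : ℕ) else 0) := by
      intro l
      by_cases hl : l = i
      · subst hl
        rw [if_pos hlt, if_pos rfl, if_neg (lt_irrefl l), hB, Function.update_of_ne hne,
          Function.update_self, add_zero]
      · rw [if_neg hl]
        by_cases hl2 : l < i
        · have h2 : l ≠ j := ne_of_lt (lt_trans hl2 hlt)
          rw [if_pos (lt_trans hl2 hlt), if_pos hl2, hB, Function.update_of_ne h2,
            Function.update_of_ne hl, zero_add]
        · have hv : (i : ℕ) < (l : ℕ) := by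
            have := Fin.lt_def.not.mp hl2
            have hvne : (l : ℕ) ≠ (i : ℕ) := fun h => hl (Fin.val_injective h)
            omega
          have : ¬ l < j := by rw [Fin.lt_def]; omega
          rw [if_neg this, if_neg hl2, zero_add]
    rw [Finset.sum_congr rfl (fun l _ => point l), Finset.sum_add_distrib, hY,
      Finset.sum_ite_eq' Finset.univ i (fun _ => ((b₁ : Fin 2) : ℕ)), if_pos (Finset.mem_univ i)]
  -- the two partial sums against A₀
  have hTaj : (∑ m : Fin n, if j < m then ((A₀ m : Fin 2) : ℕ) else 0) = X := by
    refine Finset.sum_congr rfl fun m _ => ?_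
    by_cases hm : j < m
    · have h1 : m ≠ j := (ne_of_lt hm).symm
      have h2 : m ≠ i := (ne_of_lt (lt_trans hlt hm)).symm
      rw [if_pos hm, if_pos hm, hA0, Function.update_of_ne h1, Function.update_of_ne h2]
    · rw [if_neg hm, if_neg hm]
  have hTai : (∑ m : Fin n, if i < m then ((A₀ m : Fin 2) : ℕ) else 0) = X := by
    refine Finset.sum_congr rfl fun m _ => ?_
    by_cases hm : m = j
    · subst hm
      rw [if_pos hlt, if_neg (lt_irrefl m), hA0, Function.update_self]
      rfl
    · by_cases hm2 : j < m
      · have h2 : m ≠ i := (ne_of_lt (lt_trans hlt hm2)).symm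
        rw [if_pos (lt_trans hlt hm2), if_pos hm2, hA0, Function.update_of_ne hm,
          Function.update_of_ne h2]
      · have hv : (m : ℕ) < (j : ℕ) := by
          have := Fin.lt_def.not.mp hm2
          have hvne : (m : ℕ) ≠ (j : ℕ) := fun h => hm (Fin.val_injective h)
          omega
        have h3 : ¬ i < m := by rw [Fin.lt_def]; omega
        have h4 : ¬ j < m := by rw [Fin.lt_def]; omega
        rw [if_neg h3, if_neg h4]
  -- peel the α-updates
  have step1 : E2 (Function.update (Function.update α i a₁) j a₂) B
      = (a₂ : ℕ) * ((b₁ : ℕ) + Y) + (a₁ : ℕ) * Y + E2 A₀ B := by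
    rw [E2_eq_left, sum_update (Function.update α i a₁) _ j a₂, hSbj]
    have hcomm : Function.update (Function.update α i a₁) j (0 : Fin 2)
        = Function.update (Function.update α j 0) i a₁ := Function.update_comm hne _ _ _
    rw [hcomm, sum_update (Function.update α j 0) _ i a₁, hSbi]
    have hcomm2 : Function.update (Function.update α j (0:Fin 2)) i (0 : Fin 2) = A₀ := by
      rw [hA0, Function.update_comm hne']
    rw [hcomm2, ← E2_eq_left]
    ring
  -- peel the β-updates
  have step2 : E2 A₀ B
      = (b₂ : ℕ) * X + (b₁ : ℕ) * X
        + E2 A₀ (Function.update (Function.update β i 0) j 0) := by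
    rw [hB, E2_eq_right, sum_update (Function.update β i b₁) _ j b₂, hTaj]
    have hcomm : Function.update (Function.update β i b₁) j (0 : Fin 2)
        = Function.update (Function.update β j 0) i b₁ := Function.update_comm hne _ _ _
    rw [hcomm, sum_update (Function.update β j 0) _ i b₁, hTai]
    have hcomm2 : Function.update (Function.update β j (0:Fin 2)) i (0 : Fin 2)
        = Function.update (Function.update β i 0) j 0 := Function.update_comm hne' _ _ _
    rw [hcomm2, ← E2_eq_right]
    ring
  rw [step1, step2]
  ring

end Dec
section Eval

variable {n : ℕ}

lemma update2_eq_iff {i j : Fin n} (hne : i ≠ j) (β α₀ : Fin n → Fin 2) (p₁ p₂ : Fin 2) :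
    Function.update (Function.update β i p₁) j p₂ = α₀
      ↔ ((∀ l, l ≠ i → l ≠ j → β l = α₀ l) ∧ p₁ = α₀ i ∧ p₂ = α₀ j) := by
  rw [funext_iff]
  constructor
  · intro h
    refine ⟨fun l hli hlj => ?_, ?_, ?_⟩
    · have := h l; rwa [Function.update_of_ne hlj, Function.update_of_ne hli] at this
    · have := h i; rwa [Function.update_of_ne hne, Function.update_self] at this
    · have := h j; rwa [Function.update_self] at this
  · rintro ⟨hoff, h1, h2⟩ l
    by_cases hlj : l = j
    · subst hlj; rw [Function.update_self]; exact h2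
    · rw [Function.update_of_ne hlj]
      by_cases hli : l = i
      · subst hli; rw [Function.update_self]; exact h1
      · rw [Function.update_of_ne hli]; exact hoff l hli hlj

lemma phi_basis_eval {i j : Fin n} (hne : i ≠ j) (α₀ : Fin n → Fin 2) (β : Fin n → Fin 2) :
    PhiAux n i j (v n α₀) β
      = if (∀ l, l ≠ i → l ≠ j → β l = α₀ l) then Rmat (β i, β j) (α₀ i, α₀ j) else 0 := by
  show (∑ p : Fin 2 × Fin 2, Rmat (β i, β j) p *
      (v n α₀) (Function.update (Function.update β i p.1) j p.2)) = _
  by_cases hoff : (∀ l, l ≠ i → l ≠ j → β l = α₀ l)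
  · rw [if_pos hoff]
    have hterm : ∀ p : Fin 2 × Fin 2,
        Rmat (β i, β j) p * (v n α₀) (Function.update (Function.update β i p.1) j p.2)
          = if p = (α₀ i, α₀ j) then Rmat (β i, β j) p else 0 := by
      intro p
      unfold v
      have hiff : (Function.update (Function.update β i p.1) j p.2 = α₀) ↔ (p = (α₀ i, α₀ j)) := by
        rw [update2_eq_iff hne]
        constructor
        · rintro ⟨-, h1, h2⟩; exact Prod.ext h1 h2
        · rintro rfl; exact ⟨hoff, rfl, rfl⟩
      rw [if_congr hiff rfl rfl]
      split_ifs <;> simp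
    rw [Finset.sum_congr rfl fun p _ => hterm p, Finset.sum_ite_eq' Finset.univ _ _,
      if_pos (Finset.mem_univ _)]
  · rw [if_neg hoff]
    refine Finset.sum_eq_zero fun p _ => ?_
    unfold v
    rw [if_neg fun h => hoff ((update2_eq_iff hne β α₀ p.1 p.2).mp h).1, mul_zero]

lemma mul2_basis_eval (α₀ β₀ : Fin n → Fin 2) (δ : Fin n → Fin 2) :
    mul2 n (v n α₀) (v n β₀) δ
      = if ((∀ l, α₀ l = 1 → δ l = 1) ∧ ∀ l, (if α₀ l = 1 then 0 else δ l) = β₀ l)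
        then ((-1 : K)) ^ (E2 α₀ β₀) else 0 := by
  unfold mul2
  rw [Finset.sum_eq_single α₀]
  · by_cases h1 : (∀ l, α₀ l = 1 → δ l = 1)
    · by_cases h2 : ∀ l, (if α₀ l = 1 then 0 else δ l) = β₀ l
      · have hfun : (fun l => if α₀ l = 1 then 0 else δ l) = β₀ := funext h2
        rw [if_pos h1, if_pos ⟨h1, h2⟩, hfun, Efilter_eq,
          show (v n α₀) α₀ = 1 from if_pos rfl, show (v n β₀) β₀ = 1 from if_pos rfl,
          mul_one, mul_one]
      · rw [if_pos h1, if_neg (fun hc => h2 hc.2)]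
        have : (v n β₀) (fun l => if α₀ l = 1 then 0 else δ l) = 0 := by
          unfold v
          rw [if_neg (fun h => h2 (fun l => congrFun h l))]
        rw [this, mul_zero]
    · rw [if_neg h1, if_neg (fun hc => h1 hc.1)]
  · intro α _ hne
    rw [show (v n α₀) α = 0 from if_neg hne]
    split_ifs <;> ring
  · intro h; exact absurd (Finset.mem_univ α₀) h

lemma expand (h : T n) : h = ∑ α : Fin n → Fin 2, h α • v n α := by
  funext β
  rw [Finset.sum_apply]
  simp only [Pi.smul_apply, v, smul_eq_mul, mul_ite, mul_one, mul_zero]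
  rw [Finset.sum_ite_eq Finset.univ β h, if_pos (Finset.mem_univ β)]

lemma mul2_smul_left (c : K) (f g : T n) : mul2 n (c • f) g = c • mul2 n f g := by
  funext γ
  simp only [mul2, Pi.smul_apply, smul_eq_mul, Finset.mul_sum]
  refine Finset.sum_congr rfl fun α _ => ?_
  split_ifs <;> ring

lemma mul2_smul_right (c : K) (f g : T n) : mul2 n f (c • g) = c • mul2 n f g := by
  funext γ
  simp only [mul2, Pi.smul_apply, smul_eq_mul, Finset.mul_sum]
  refine Finset.sum_congr rfl fun α _ => ?_
  split_ifs <;> ring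

lemma mul2_add_left (f f' g : T n) : mul2 n (f + f') g = mul2 n f g + mul2 n f' g := by
  funext γ
  simp only [mul2, Pi.add_apply]
  rw [← Finset.sum_add_distrib]
  refine Finset.sum_congr rfl fun α _ => ?_
  split_ifs <;> ring

lemma mul2_add_right (f g g' : T n) : mul2 n f (g + g') = mul2 n f g + mul2 n f g' := by
  funext γ
  simp only [mul2, Pi.add_apply]
  rw [← Finset.sum_add_distrib]
  refine Finset.sum_congr rfl fun α _ => ?_
  split_ifs <;> ring

lemma mul2_zero_left (g : T n) : mul2 n 0 g = 0 := by
  funext γ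
  simp [mul2]

lemma mul2_zero_right (f : T n) : mul2 n f 0 = 0 := by
  funext γ
  simp [mul2]

lemma mul2_sum_left {ι : Type*} (s : Finset ι) (F : ι → T n) (g : T n) :
    mul2 n (∑ x ∈ s, F x) g = ∑ x ∈ s, mul2 n (F x) g := by
  classical
  induction s using Finset.induction_on with
  | empty => simp [mul2_zero_left]
  | insert _ _ hx ih => rw [Finset.sum_insert hx, Finset.sum_insert hx, mul2_add_left, ih]

lemma mul2_sum_right {ι : Type*} (s : Finset ι) (F : ι → T n) (f : T n) :
    mul2 n f (∑ x ∈ s, F x) = ∑ x ∈ s, mul2 n f (F x) := by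
  classical
  induction s using Finset.induction_on with
  | empty => simp [mul2_zero_right]
  | insert _ _ hx ih => rw [Finset.sum_insert hx, Finset.sum_insert hx, mul2_add_right, ih]

end Eval
section LocalId

lemma q_ne_zero : q ≠ 0 := RatFunc.X_ne_zero

/-- local complement -/
def cL (a p : Fin 2) : Fin 2 := if a = 1 then 0 else p

/-- Local form of the left-hand side coefficient. -/
def FF (c1 c2 a1 a2 b1 b2 : Fin 2) (s u w : K) : K :=
  q * ∑ p : Fin 2 × Fin 2, Rmat (c1, c2) p *
    (if (a1 = 1 → p.1 = 1) ∧ (a2 = 1 → p.2 = 1) ∧ cL a1 p.1 = b1 ∧ cL a2 p.2 = b2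
     then s * u ^ ((a1 : ℕ) + (a2 : ℕ)) * w ^ ((b1 : ℕ) + (b2 : ℕ))
          * (-1 : K) ^ ((a2 : ℕ) * (b1 : ℕ))
     else 0)

/-- Local form of the right-hand side coefficient. -/
def GG (c1 c2 a1 a2 b1 b2 : Fin 2) (s u w : K) : K :=
  ∑ a : Fin 2 × Fin 2,
    (if (a.1 = 1 → c1 = 1) ∧ (a.2 = 1 → c2 = 1)
     then (s * u ^ ((a.1 : ℕ) + (a.2 : ℕ))
            * w ^ (((cL a.1 c1 : Fin 2) : ℕ) + ((cL a.2 c2 : Fin 2) : ℕ))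
            * (-1 : K) ^ ((a.2 : ℕ) * ((cL a.1 c1 : Fin 2) : ℕ)))
          * Rmat (a.1, a.2) (a1, a2) * Rmat (cL a.1 c1, cL a.2 c2) (b1, b2)
     else 0)

lemma FG (c1 c2 a1 a2 b1 b2 : Fin 2) (s u w : K) :
    FF c1 c2 a1 a2 b1 b2 s u w = GG c1 c2 a1 a2 b1 b2 s u w := by
  have hq : q ≠ 0 := q_ne_zero
  unfold FF GG
  rw [Fintype.sum_prod_type, Fin.sum_univ_two, Fin.sum_univ_two, Fin.sum_univ_two,
    Fintype.sum_prod_type, Fin.sum_univ_two, Fin.sum_univ_two, Fin.sum_univ_two]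
  fin_cases c1 <;> fin_cases c2 <;> fin_cases a1 <;> fin_cases a2 <;> fin_cases b1 <;>
    fin_cases b2 <;>
  · simp only [Rmat, cL, Prod.mk.injEq, Fin.isValue, show (1:Fin 2) ≠ 0 by decide,
      show (0:Fin 2) ≠ 1 by decide, Fin.zero_eta, Fin.mk_one, if_true, if_false, ite_true, ite_false, and_true,
      true_and, Fin.val_zero, Fin.val_one, forall_const, IsEmpty.forall_iff, and_false,
      false_and, not_false_eq_true, reduceIte, pow_zero, pow_one, mul_one, one_mul,
      mul_zero, zero_mul, add_zero, zero_add]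
    try field_simp
    try ring
    try exact Or.inl trivial

end LocalId
section KeyBasis

variable {n : ℕ}

/-- Insert a local pair at positions `i`, `j`. -/
def emb (i j : Fin n) (δ : Fin n → Fin 2) (p : Fin 2 × Fin 2) : Fin n → Fin 2 :=
  Function.update (Function.update δ i p.1) j p.2

lemma emb_i {i j : Fin n} (hne : i ≠ j) (δ : Fin n → Fin 2) (p : Fin 2 × Fin 2) :
    emb i j δ p i = p.1 := by
  unfold emb; rw [Function.update_of_ne hne, Function.update_self]

lemma emb_j {i j : Fin n} (δ : Fin n → Fin 2) (p : Fin 2 × Fin 2) :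
    emb i j δ p j = p.2 := Function.update_self _ _ _

lemma emb_other (i j : Fin n) (δ : Fin n → Fin 2) (p : Fin 2 × Fin 2) (l : Fin n)
    (hli : l ≠ i) (hlj : l ≠ j) : emb i j δ p l = δ l := by
  unfold emb; rw [Function.update_of_ne hlj, Function.update_of_ne hli]

lemma emb_self {i j : Fin n} (hne : i ≠ j) (δ : Fin n → Fin 2) :
    emb i j δ (δ i, δ j) = δ := by
  funext l
  by_cases hlj : l = j
  · subst hlj; rw [emb_j]
  · by_cases hli : l = i
    · subst hli; rw [emb_i hne]
    · rw [emb_other i j δ _ l hli hlj]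

lemma phiAux_apply (i j : Fin n) (f : T n) (β : Fin n → Fin 2) :
    PhiAux n i j f β = ∑ p : Fin 2 × Fin 2, Rmat (β i, β j) p * f (emb i j β p) := rfl

/-- base sign -/
def sE (i j : Fin n) (α₀ β₀ : Fin n → Fin 2) : K :=
  (-1 : K) ^ (E2 (emb i j α₀ (0, 0)) (emb i j β₀ (0, 0)))

def sY (i : Fin n) (β₀ : Fin n → Fin 2) : K :=
  (-1 : K) ^ (∑ l : Fin n, if l < i then ((β₀ l : Fin 2) : ℕ) else 0)

def sX (j : Fin n) (α₀ : Fin n → Fin 2) : K :=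
  (-1 : K) ^ (∑ m : Fin n, if j < m then ((α₀ m : Fin 2) : ℕ) else 0)

lemma sign_dec (i j : Fin n) (hij : (i : ℕ) + 1 = (j : ℕ)) (α₀ β₀ : Fin n → Fin 2)
    (a b : Fin 2 × Fin 2) :
    (-1 : K) ^ (E2 (emb i j α₀ a) (emb i j β₀ b))
      = sE i j α₀ β₀ * (sY i β₀) ^ ((a.1 : ℕ) + (a.2 : ℕ))
          * (sX j α₀) ^ ((b.1 : ℕ) + (b.2 : ℕ))
          * (-1 : K) ^ ((a.2 : ℕ) * ((b.1 : Fin 2) : ℕ)) := by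
  unfold sE sY sX emb
  rw [E2_dec i j hij, pow_add, pow_add, pow_add, pow_mul, pow_mul]

lemma forall_split (i j : Fin n) (P : Fin n → Prop) :
    (∀ l, P l) ↔ ((∀ l, l ≠ i → l ≠ j → P l) ∧ P i ∧ P j) := by
  constructor
  · exact fun h => ⟨fun l _ _ => h l, h i, h j⟩
  · rintro ⟨h, hi, hj⟩ l
    by_cases hli : l = i
    · subst hli; exact hi
    · by_cases hlj : l = j
      · subst hlj; exact hj
      · exact h l hli hlj

lemma keybasis (i j : Fin n) (hij : (i : ℕ) + 1 = (j : ℕ)) (α₀ β₀ : Fin n → Fin 2) :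
    q • PhiAux n i j (mul2 n (v n α₀) (v n β₀))
      = mul2 n (PhiAux n i j (v n α₀)) (PhiAux n i j (v n β₀)) := by
  have hne : i ≠ j := by intro h; subst h; omega
  funext γ
  by_cases hGoff : ∀ l : Fin n, l ≠ i → l ≠ j →
      ((α₀ l = 1 → γ l = 1) ∧ (if α₀ l = 1 then (0 : Fin 2) else γ l) = β₀ l)
  · -- main case
    have hL : (q • PhiAux n i j (mul2 n (v n α₀) (v n β₀))) γ
        = FF (γ i) (γ j) (α₀ i) (α₀ j) (β₀ i) (β₀ j) (sE i j α₀ β₀) (sY i β₀) (sX j α₀) := by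
      rw [Pi.smul_apply, smul_eq_mul, phiAux_apply]
      unfold FF
      congr 1
      refine Finset.sum_congr rfl fun p _ => ?_
      rw [mul2_basis_eval]
      congr 1
      have hiff : ((∀ l, α₀ l = 1 → emb i j γ p l = 1)
            ∧ ∀ l, (if α₀ l = 1 then (0 : Fin 2) else emb i j γ p l) = β₀ l)
          ↔ ((α₀ i = 1 → p.1 = 1) ∧ (α₀ j = 1 → p.2 = 1)
            ∧ cL (α₀ i) p.1 = β₀ i ∧ cL (α₀ j) p.2 = β₀ j) := by
        constructor
        · rintro ⟨h1, h2⟩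
          refine ⟨fun hα => ?_, fun hα => ?_, ?_, ?_⟩
          · have := h1 i hα; rwa [emb_i hne] at this
          · have := h1 j hα; rwa [emb_j] at this
          · have := h2 i; rw [emb_i hne] at this; exact this
          · have := h2 j; rw [emb_j] at this; exact this
        · rintro ⟨e1, e2, e3, e4⟩
          constructor
          · intro l hα
            by_cases hli : l = i
            · subst hli; rw [emb_i hne]; exact e1 hα
            · by_cases hlj : l = j
              · subst hlj; rw [emb_j]; exact e2 hα
              · rw [emb_other i j γ p l hli hlj]; exact (hGoff l hli hlj).1 hα
          · intro l
            by_cases hli : l = i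
            · subst hli; rw [emb_i hne]; exact e3
            · by_cases hlj : l = j
              · subst hlj; rw [emb_j]; exact e4
              · rw [emb_other i j γ p l hli hlj]; exact (hGoff l hli hlj).2
      have hS : (-1 : K) ^ (E2 α₀ β₀)
          = sE i j α₀ β₀ * (sY i β₀) ^ ((α₀ i : ℕ) + (α₀ j : ℕ))
              * (sX j α₀) ^ ((β₀ i : ℕ) + (β₀ j : ℕ))
              * (-1 : K) ^ ((α₀ j : ℕ) * ((β₀ i : Fin 2) : ℕ)) := by
        conv_lhs => rw [← emb_self hne α₀, ← emb_self hne β₀]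
        exact sign_dec i j hij α₀ β₀ (α₀ i, α₀ j) (β₀ i, β₀ j)
      exact if_congr hiff hS rfl
    have hR : mul2 n (PhiAux n i j (v n α₀)) (PhiAux n i j (v n β₀)) γ
        = GG (γ i) (γ j) (α₀ i) (α₀ j) (β₀ i) (β₀ j) (sE i j α₀ β₀) (sY i β₀) (sX j α₀) := by
      have hzero : ∀ α ∈ (Finset.univ : Finset (Fin n → Fin 2)),
          α ∉ Finset.image (emb i j α₀) Finset.univ →
          (if (∀ l, α l = 1 → γ l = 1) then
            ((-1 : K) ^ (∑ p ∈ Finset.univ.filter (fun p : Fin n × Fin n => p.1 < p.2),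
                (((fun l => if α l = 1 then 0 else γ l) p.1 : Fin 2) : ℕ) * ((α p.2 : Fin 2) : ℕ)))
              * (PhiAux n i j (v n α₀)) α
              * (PhiAux n i j (v n β₀)) (fun l => if α l = 1 then 0 else γ l)
          else 0) = 0 := by
        intro α _ hα
        have hnoff : ¬ (∀ l, l ≠ i → l ≠ j → α l = α₀ l) := by
          intro hoff
          refine hα (Finset.mem_image.mpr ⟨(α i, α j), Finset.mem_univ _, ?_⟩)
          funext l
          by_cases hlj : l = j
          · subst hlj; rw [emb_j]
          · by_cases hli : l = i
            · subst hli; rw [emb_i hne]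
            · rw [emb_other i j α₀ _ l hli hlj]; exact (hoff l hli hlj).symm
        rw [phi_basis_eval hne, if_neg hnoff]
        split_ifs <;> ring
      show (∑ α : Fin n → Fin 2, _) = _
      rw [← Finset.sum_subset
        (Finset.subset_univ (Finset.image (emb i j α₀) Finset.univ)) hzero]
      rw [Finset.sum_image (fun a _ a' _ h => Prod.ext
        (by rw [← emb_i hne α₀ a, h, emb_i hne])
        (by rw [← emb_j α₀ a, h, emb_j]))]
      unfold GG
      refine Finset.sum_congr rfl fun a _ => ?_
      have hcompfun : (fun l => if emb i j α₀ a l = 1 then (0 : Fin 2) else γ l)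
          = emb i j β₀ (cL a.1 (γ i), cL a.2 (γ j)) := by
        funext l
        by_cases hlj : l = j
        · subst hlj; rw [emb_j, emb_j]; rfl
        · by_cases hli : l = i
          · subst hli; rw [emb_i hne, emb_i hne]; rfl
          · rw [emb_other i j α₀ a l hli hlj, emb_other i j β₀ _ l hli hlj]
            exact (hGoff l hli hlj).2
      have hconda : (∀ l, emb i j α₀ a l = 1 → γ l = 1)
          ↔ ((a.1 = 1 → γ i = 1) ∧ (a.2 = 1 → γ j = 1)) := by
        constructor
        · intro h
          constructor
          · intro h1; have := h i; rw [emb_i hne] at this; exact this h1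
          · intro h2; have := h j; rw [emb_j] at this; exact this h2
        · rintro ⟨h1, h2⟩ l hα
          by_cases hli : l = i
          · subst hli; rw [emb_i hne] at hα; exact h1 hα
          · by_cases hlj : l = j
            · subst hlj; rw [emb_j] at hα; exact h2 hα
            · rw [emb_other i j α₀ a l hli hlj] at hα; exact (hGoff l hli hlj).1 hα
      rw [hcompfun]
      rw [phi_basis_eval hne α₀ (emb i j α₀ a),
        if_pos (fun l hli hlj => emb_other i j α₀ a l hli hlj)]
      rw [phi_basis_eval hne β₀ (emb i j β₀ (cL a.1 (γ i), cL a.2 (γ j))),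
        if_pos (fun l hli hlj => emb_other i j β₀ _ l hli hlj)]
      simp only [emb_i hne, emb_j]
      rw [Efilter_eq, sign_dec i j hij]
      exact if_congr hconda rfl rfl
    rw [hL, hR]
    exact FG _ _ _ _ _ _ _ _ _
  · -- degenerate case: both sides vanish
    have hviol : ∃ l : Fin n, l ≠ i ∧ l ≠ j ∧
        ¬ ((α₀ l = 1 → γ l = 1) ∧ (if α₀ l = 1 then (0 : Fin 2) else γ l) = β₀ l) := by
      rcases not_forall.mp hGoff with ⟨l₀, hl₀⟩
      rcases _root_.not_imp.mp hl₀ with ⟨h1, h2⟩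
      rcases _root_.not_imp.mp h2 with ⟨h3, h4⟩
      exact ⟨l₀, h1, h3, h4⟩
    obtain ⟨l₀, hl₀i, hl₀j, hl₀⟩ := hviol
    have hL : (q • PhiAux n i j (mul2 n (v n α₀) (v n β₀))) γ = 0 := by
      rw [Pi.smul_apply, smul_eq_mul, phiAux_apply]
      rw [Finset.sum_eq_zero, mul_zero]
      intro p _
      rw [mul2_basis_eval, if_neg, mul_zero]
      rintro ⟨h1, h2⟩
      refine hl₀ ⟨fun hα => ?_, ?_⟩
      · have := h1 l₀ hα; rwa [emb_other i j γ p l₀ hl₀i hl₀j] at this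
      · have := h2 l₀; rwa [emb_other i j γ p l₀ hl₀i hl₀j] at this
    rw [hL]
    symm
    refine Finset.sum_eq_zero fun α _ => ?_
    by_cases hoffα : ∀ l, l ≠ i → l ≠ j → α l = α₀ l
    · rcases not_and_or.mp hl₀ with hv | hv
      · obtain ⟨hα1, hγ1⟩ := _root_.not_imp.mp hv
        rw [if_neg]
        intro hc
        exact hγ1 (hc l₀ ((hoffα l₀ hl₀i hl₀j).trans hα1))
      · have h0 : PhiAux n i j (v n β₀) (fun l => if α l = 1 then (0 : Fin 2) else γ l) = 0 := by
          rw [phi_basis_eval hne, if_neg]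
          intro hc
          have h2 : (if α l₀ = 1 then (0 : Fin 2) else γ l₀) = β₀ l₀ := hc l₀ hl₀i hl₀j
          rw [hoffα l₀ hl₀i hl₀j] at h2
          exact hv h2
        rw [h0]
        split_ifs <;> ring
    · have h0 : PhiAux n i j (v n α₀) α = 0 := by
        rw [phi_basis_eval hne, if_neg hoffα]
      rw [h0]
      split_ifs <;> ring

end KeyBasis
section Final

variable {n : ℕ}

lemma keylemma (i j : Fin n) (hij : (i : ℕ) + 1 = (j : ℕ)) (f g : T n) :
    mul2 n (PhiAux n i j f) (PhiAux n i j g) = q • PhiAux n i j (mul2 n f g) := by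
  conv_lhs => rw [expand f, expand g]
  conv_rhs => rw [expand f, expand g]
  simp only [map_sum, map_smul, mul2_sum_left, mul2_sum_right, mul2_smul_left,
    mul2_smul_right, Finset.smul_sum]
  refine Finset.sum_congr rfl fun α₀ _ => Finset.sum_congr rfl fun β₀ _ => ?_
  rw [← keybasis i j hij]
  simp only [smul_smul]
  congr 1
  ring

lemma psi_phi (i j : Fin n) (hij : (i : ℕ) + 1 = (j : ℕ)) :
    ∀ (k : ℕ) (u : Fin (k + 1) → T n),
      Psi n (k + 1) (fun l => PhiAux n i j (u l)) = q ^ k • PhiAux n i j (Psi n (k + 1) u) := by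
  intro k
  induction k with
  | zero =>
    intro u
    show PhiAux n i j (u 0) = q ^ 0 • PhiAux n i j (Psi n 1 u)
    rw [pow_zero, one_smul]
    rfl
  | succ k ih =>
    intro u
    show mul2 n (Psi n (k + 1) (fun l => PhiAux n i j (u l.castSucc)))
        (PhiAux n i j (u (Fin.last (k + 1)))) = _
    rw [ih (fun l => u l.castSucc), mul2_smul_left, keylemma i j hij, smul_smul, ← pow_succ]
    rfl

end Final

theorem stmt0 (n k t : ℕ) (hn : 2 ≤ n) (hk1 : 1 ≤ k) (hk2 : k ≤ n - 1)
    (ht1 : 1 ≤ t) (ht2 : t ≤ n - 1) (u : Fin k → T n) (hu : ∀ i, u i ∈ Hk n 1) :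
    Psi n k (fun i => Phi n t (u i)) = q ^ (k - 1) • Phi n t (Psi n k u) := by
  have htn : 0 < t ∧ t < n := ⟨ht1, by omega⟩
  obtain ⟨k', rfl⟩ : ∃ k', k = k' + 1 := ⟨k - 1, by omega⟩
  have hPhi : Phi n t = PhiAux n ⟨t - 1, by omega⟩ ⟨t, htn.2⟩ := by
    rw [Phi, dif_pos htn]
  rw [hPhi, Nat.add_sub_cancel]
  exact psi_phi _ _ (by simp only [Fin.val_mk]; omega) k' u

end
end

section
/- Let n ≥ 2 and fix j with 0 ≤ j ≤ n−1. For every integer d, there exists N ∈ ℕ such that for all m ≥ N, the degree-d coefficient of the Laurent series expansion of Σ_{i=0}^{n−1} q^{2mn(n−1−i)} · C(n)_{i+1, j+1} equals the degree-d coefficient of the Laurent series expansion of C(n)_{n, j+1}. (Stabilization of the twist-insertion coefficients as the number of full twists tends to infinity.) -/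
open scoped BigOperators

set_option maxHeartbeats 1000000
set_option synthInstance.maxHeartbeats 400000

noncomputable section

theorem stmt7 (n : ℕ) (hn : 2 ≤ n) (j : Fin n) (d : ℤ) :
    ∃ N : ℕ, ∀ m : ℕ, N ≤ m →
      (((∑ i : Fin n, q ^ (2 * m * n * (n - 1 - (i : ℕ))) * Cmat n i j : K) :
          LaurentSeries ℂ)).coeff d
        = (((Cmat n ⟨n - 1, by omega⟩ j : K) : LaurentSeries ℂ)).coeff d := by
  have hlast : (n - 1 : ℕ) < n := by omega
  refine ⟨Finset.univ.sup (fun i : Fin n =>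
      (d - ((Cmat n i j : K) : LaurentSeries ℂ).order).toNat + 1), ?_⟩
  intro m hm
  have hcoeff : (((∑ i : Fin n, q ^ (2 * m * n * (n - 1 - (i : ℕ))) * Cmat n i j : K) :
      LaurentSeries ℂ)).coeff d
      = ∑ i : Fin n, (((q ^ (2 * m * n * (n - 1 - (i : ℕ))) * Cmat n i j : K) :
        LaurentSeries ℂ)).coeff d := by
    rw [map_sum]
    exact map_sum (HahnSeries.coeff.addMonoidHom d) _ _
  rw [hcoeff]
  rw [Finset.sum_eq_single (⟨n - 1, hlast⟩ : Fin n)]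
  · congr 2
    simp [Nat.sub_self]
  · intro i _ hi
    set E : ℕ := 2 * m * n * (n - 1 - (i : ℕ)) with hE
    have hiv : (i : ℕ) ≠ n - 1 := fun h => hi (Fin.ext h)
    have hilt := i.isLt
    have hc : 1 ≤ n - 1 - (i : ℕ) := by omega
    have hEm : m ≤ E := by
      calc m ≤ 2 * m * n := by nlinarith
      _ = 2 * m * n * 1 := (mul_one _).symm
      _ ≤ 2 * m * n * (n - 1 - (i : ℕ)) := Nat.mul_le_mul_left _ hc
    have hmN : (d - ((Cmat n i j : K) : LaurentSeries ℂ).order).toNat + 1 ≤ m :=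
      le_trans (Finset.le_sup (f := fun i : Fin n =>
        (d - ((Cmat n i j : K) : LaurentSeries ℂ).order).toNat + 1) (Finset.mem_univ i)) hm
    have hord : d - (E : ℤ) < ((Cmat n i j : K) : LaurentSeries ℂ).order := by
      have h1 : d - ((Cmat n i j : K) : LaurentSeries ℂ).order
          ≤ ((d - ((Cmat n i j : K) : LaurentSeries ℂ).order).toNat : ℤ) := Int.self_le_toNat _
      have h2 : (m : ℤ) ≤ (E : ℤ) := by exact_mod_cast hEm
      have h3 : ((d - ((Cmat n i j : K) : LaurentSeries ℂ).order).toNat : ℤ) + 1 ≤ (m : ℤ) := by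
        exact_mod_cast hmN
      omega
    have hX : ((q ^ E * Cmat n i j : K) : LaurentSeries ℂ)
        = HahnSeries.single (E : ℤ) (1 : ℂ) * ((Cmat n i j : K) : LaurentSeries ℂ) := by
      rw [map_mul, map_pow, q, RatFunc.coe_X, HahnSeries.single_pow]
      simp
    rw [hX]
    have hd : d = (d - E) + (E : ℤ) := by ring
    rw [hd, HahnSeries.coeff_single_mul_add, one_mul]
    exact HahnSeries.coeff_eq_zero_of_lt_order (by omega)
  · intro h; exact absurd (Finset.mem_univ _) h


end
end
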